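/- arXiv:2112.05521 — 2 statements merged into one kernel-verified Lean document; each statement's English description precedes it below -/
import Mathlib

section
/- For every β > 1 and M > 0, the tail sum T(n) := M·exp(-n/β)·Σ_{k=n+1}^{∞} (n/β)^k / k! tends to 0 as n → ∞. -/
open Filter

private lemma pow_div_fact_le_exp {x : ℝ} (hx : 0 ≤ x) (n : ℕ) :
    x ^ n / n.factorial ≤ Real.exp x := by
  have h := Real.sum_le_exp_of_nonneg hx (n + 1)
  refine le_trans ?_ h
  have : x ^ n / n.factorial = ∑ i ∈ Finset.range (n+1), if i = n then x ^ i / i.factorial else 0 := by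
    simp
  rw [this]
  apply Finset.sum_le_sum
  intro i _
  split
  · exact le_rfl
  · positivity

theorem tail_sum_tendsto_zero (β M : ℝ) (hβ : 1 < β) (hM : 0 < M) :
    Tendsto (fun n : ℕ =>
        M * Real.exp (-(n : ℝ) / β) *
          ∑' p : ℕ, ((n : ℝ) / β) ^ (n + 1 + p) / (Nat.factorial (n + 1 + p)))
      atTop (nhds 0) := by
  have hβ0 : (0:ℝ) < β := by linarith
  set r : ℝ := Real.exp (1 - 1/β) / β with hr
  have hr0 : 0 ≤ r := by positivity
  have hr1 : r < 1 := by
    rw [hr, div_lt_one hβ0]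
    have h := Real.log_lt_sub_one_of_pos (x := 1/β) (by positivity) (by
      intro h; rw [div_eq_one_iff_eq (by linarith)] at h; linarith)
    rw [Real.log_div one_ne_zero (by linarith), Real.log_one] at h
    have : 1 - 1/β < Real.log β := by linarith
    calc Real.exp (1 - 1/β) < Real.exp (Real.log β) := Real.exp_lt_exp.mpr this
      _ = β := Real.exp_log hβ0
  set C : ℝ := M * (β / (β - 1)) * (Real.exp 1 / β) with hC
  have hβ1 : (0:ℝ) < β - 1 := by linarith
  have hC0 : 0 ≤ C := by
    apply mul_nonneg (mul_nonneg hM.le (div_nonneg hβ0.le hβ1.le))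
    positivity
  have hbnd : Tendsto (fun n : ℕ => C * r ^ n) atTop (nhds 0) := by
    have := tendsto_pow_atTop_nhds_zero_of_lt_one hr0 hr1
    simpa using this.const_mul C
  apply squeeze_zero (g := fun n : ℕ => C * r ^ n) ?_ ?_ hbnd
  · intro n
    have hx : (0:ℝ) ≤ (n:ℝ)/β := by positivity
    apply mul_nonneg (by positivity)
    apply tsum_nonneg
    intro p
    positivity
  · intro n
    set x : ℝ := (n:ℝ)/β with hxdef
    have hx : 0 ≤ x := by positivity
    -- geometric comparison for the tail
    set A : ℝ := x ^ (n+1) / (Nat.factorial (n+1)) with hA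
    have hA0 : 0 ≤ A := by positivity
    have hfg : ∀ p : ℕ, x ^ (n + 1 + p) / (Nat.factorial (n + 1 + p)) ≤ A * (1/β) ^ p := by
      intro p
      induction p with
      | zero => simp [hA]
      | succ p ih =>
        have hfac : (Nat.factorial (n + 1 + (p+1)) : ℝ)
            = (Nat.factorial (n + 1 + p) : ℝ) * ((n:ℝ) + 1 + p + 1) := by
          have : n + 1 + (p + 1) = (n + 1 + p) + 1 := by ring
          rw [this, Nat.factorial_succ]
          push_cast; ring
        have hstep : x ^ (n + 1 + (p+1)) / (Nat.factorial (n + 1 + (p+1)))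
            = (x ^ (n + 1 + p) / (Nat.factorial (n + 1 + p))) * (x / ((n:ℝ) + 1 + p + 1)) := by
          rw [hfac]
          have : n + 1 + (p + 1) = (n + 1 + p) + 1 := by ring
          rw [this, pow_succ]
          have h1 : (Nat.factorial (n + 1 + p) : ℝ) ≠ 0 := by positivity
          have h2 : ((n:ℝ) + 1 + p + 1) ≠ 0 := by positivity
          field_simp
        rw [hstep]
        have hratio : x / ((n:ℝ) + 1 + p + 1) ≤ 1/β := by
          have hd : (0:ℝ) < (n:ℝ) + 1 + p + 1 := by positivity
          rw [div_le_div_iff₀ hd hβ0]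
          have hxβ : x * β = (n:ℝ) := by rw [hxdef]; field_simp
          nlinarith [Nat.cast_nonneg (α := ℝ) p]
        calc x ^ (n + 1 + p) / (Nat.factorial (n + 1 + p)) * (x / ((n:ℝ) + 1 + p + 1))
            ≤ (A * (1/β) ^ p) * (1/β) := by
              apply mul_le_mul ih hratio (by positivity)
              exact mul_nonneg hA0 (pow_nonneg (by positivity) p)
          _ = A * (1/β) ^ (p+1) := by ring
    have hgsum : Summable (fun p : ℕ => A * (1/β) ^ p) := by
      apply Summable.mul_left
      apply summable_geometric_of_lt_one (by positivity)
      rw [div_lt_one hβ0]; linarith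
    have hfsum : Summable (fun p : ℕ => x ^ (n + 1 + p) / (Nat.factorial (n + 1 + p))) := by
      apply Summable.of_nonneg_of_le (fun p => by positivity) hfg hgsum
    have htsum : (∑' p : ℕ, x ^ (n + 1 + p) / (Nat.factorial (n + 1 + p)))
        ≤ A * (β / (β - 1)) := by
      calc (∑' p : ℕ, x ^ (n + 1 + p) / (Nat.factorial (n + 1 + p)))
          ≤ ∑' p : ℕ, A * (1/β) ^ p := Summable.tsum_le_tsum hfg hfsum hgsum
        _ = A * (1 - 1/β)⁻¹ := by
            rw [tsum_mul_left, tsum_geometric_of_lt_one (by positivity)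
              (by rw [div_lt_one hβ0]; linarith)]
        _ = A * (β / (β - 1)) := by
            congr 1
            rw [one_sub_div (by linarith), inv_div]
    -- bound A by (e/β)^(n+1)
    have hAe : A ≤ (Real.exp 1 / β) ^ (n+1) := by
      have h1 : x ^ (n+1) ≤ (((n:ℝ)+1) / β) ^ (n+1) := by
        apply pow_le_pow_left₀ hx
        rw [hxdef]
        gcongr
        linarith
      have h2 : (((n:ℝ)+1)) ^ (n+1) / (Nat.factorial (n+1)) ≤ Real.exp ((n:ℝ)+1) := by
        have := pow_div_fact_le_exp (x := ((n:ℝ)+1)) (by positivity) (n+1)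
        simpa using this
      have hexp : Real.exp ((n:ℝ)+1) = (Real.exp 1) ^ (n+1) := by
        rw [← Real.exp_nat_mul]
        norm_num
      calc A = x ^ (n+1) / (Nat.factorial (n+1)) := rfl
        _ ≤ (((n:ℝ)+1) / β) ^ (n+1) / (Nat.factorial (n+1)) := by
            gcongr
        _ = (1/β) ^ (n+1) * ((((n:ℝ)+1)) ^ (n+1) / (Nat.factorial (n+1))) := by
            rw [div_pow, div_pow, one_pow]; ring
        _ ≤ (1/β) ^ (n+1) * Real.exp ((n:ℝ)+1) := by
            apply mul_le_mul_of_nonneg_left h2 (by positivity)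
        _ = (Real.exp 1 / β) ^ (n+1) := by
            rw [hexp, div_pow, one_pow, div_pow]
            ring
    -- final assembly
    have hexpn : Real.exp (-(n:ℝ)/β) = (Real.exp (-1/β)) ^ n := by
      rw [← Real.exp_nat_mul]
      congr 1
      ring
    calc M * Real.exp (-(n:ℝ)/β) * (∑' p : ℕ, x ^ (n + 1 + p) / (Nat.factorial (n + 1 + p)))
        ≤ M * Real.exp (-(n:ℝ)/β) * (A * (β / (β - 1))) := by
          apply mul_le_mul_of_nonneg_left htsum (by positivity)
      _ ≤ M * Real.exp (-(n:ℝ)/β) * ((Real.exp 1 / β) ^ (n+1) * (β / (β - 1))) := by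
          apply mul_le_mul_of_nonneg_left ?_ (by positivity)
          apply mul_le_mul_of_nonneg_right hAe
          exact div_nonneg hβ0.le hβ1.le
      _ = C * r ^ n := by
          rw [hexpn, hC, hr, pow_succ]
          have : (Real.exp (1 - 1/β) / β) ^ n = (Real.exp (-1/β)) ^ n * (Real.exp 1 / β) ^ n := by
            rw [← mul_pow]
            congr 1
            have he : Real.exp (-1/β) * Real.exp 1 = Real.exp (1 - 1/β) := by
              rw [← Real.exp_add]; ring_nf
            rw [← he]; ring
          rw [this]
          ring
end

section
/- Suppose that for every τ > 0 there is at most one x ∈ (0,1) with Im(ζ(x+iτ)/(x+iτ)) = 0. Then every non-trivial zero of ζ lies on the line Re(s) = 1/2. -/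
open Complex Filter Set

private lemma hasDerivAt_conj_comp {f : ℂ → ℂ} {z d : ℂ}
    (hf : HasDerivAt f d ((starRingEnd ℂ) z)) :
    HasDerivAt (fun w => (starRingEnd ℂ) (f ((starRingEnd ℂ) w))) ((starRingEnd ℂ) d) z := by
  rw [hasDerivAt_iff_isLittleO] at hf ⊢
  have hc : Tendsto (fun w : ℂ => (starRingEnd ℂ) w) (nhds z) (nhds ((starRingEnd ℂ) z)) :=
    (continuous_conj.tendsto z)
  have h2 := hf.comp_tendsto hc
  rw [Asymptotics.isLittleO_iff] at h2 ⊢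
  intro c hc'
  filter_upwards [h2 hc'] with w hw
  have e1 : (starRingEnd ℂ) (f ((starRingEnd ℂ) w)) - (starRingEnd ℂ) (f ((starRingEnd ℂ) z))
      - (w - z) • (starRingEnd ℂ) d
      = (starRingEnd ℂ) (f ((starRingEnd ℂ) w) - f ((starRingEnd ℂ) z)
        - ((starRingEnd ℂ) w - (starRingEnd ℂ) z) • d) := by
    simp only [map_sub, map_mul, smul_eq_mul, conj_conj]
  rw [e1, RCLike.norm_conj]
  have e2 : ‖w - z‖ = ‖(starRingEnd ℂ) w - (starRingEnd ℂ) z‖ := by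
    rw [← map_sub, RCLike.norm_conj]
  rw [e2]
  simpa using hw

private lemma zeta_conj_of_one_lt {w : ℂ} (hw : 1 < w.re) :
    riemannZeta ((starRingEnd ℂ) w) = (starRingEnd ℂ) (riemannZeta w) := by
  rw [zeta_eq_tsum_one_div_nat_cpow (by rwa [conj_re]), zeta_eq_tsum_one_div_nat_cpow hw]
  rw [show (starRingEnd ℂ) (∑' n : ℕ, 1 / (n : ℂ) ^ w) = star (∑' n : ℕ, 1 / (n : ℂ) ^ w) from rfl,
    tsum_star]
  congr 1
  funext n
  have harg : ((n : ℂ)).arg ≠ Real.pi := by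
    rw [natCast_arg]
    exact fun h => Real.pi_ne_zero h.symm
  have : (n : ℂ) ^ ((starRingEnd ℂ) w) = (starRingEnd ℂ) ((starRingEnd ℂ) (n : ℂ) ^ w) :=
    cpow_conj _ _ harg
  rw [this, conj_natCast]
  simp [div_eq_mul_inv, ← map_inv₀]

private lemma zeta_conj {z : ℂ} (hz : z ≠ 1) :
    riemannZeta ((starRingEnd ℂ) z) = (starRingEnd ℂ) (riemannZeta z) := by
  have hU : IsOpen ({(1 : ℂ)}ᶜ : Set ℂ) := isOpen_compl_singleton
  have hfd : DifferentiableOn ℂ riemannZeta ({(1 : ℂ)}ᶜ) :=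
    fun w hw => (differentiableAt_riemannZeta hw).differentiableWithinAt
  have hfa : AnalyticOnNhd ℂ riemannZeta ({(1 : ℂ)}ᶜ) := hfd.analyticOnNhd hU
  have hgd : DifferentiableOn ℂ (fun w => (starRingEnd ℂ) (riemannZeta ((starRingEnd ℂ) w)))
      ({(1 : ℂ)}ᶜ) := by
    intro w hw
    have hw1 : (starRingEnd ℂ) w ≠ 1 := by
      intro h
      apply hw
      have := congrArg (starRingEnd ℂ) h
      simpa using this
    exact (hasDerivAt_conj_comp
      ((differentiableAt_riemannZeta hw1).hasDerivAt)).differentiableAt.differentiableWithinAt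
  have hga := hgd.analyticOnNhd hU
  have hpre : IsPreconnected ({(1 : ℂ)}ᶜ : Set ℂ) := by
    have := isConnected_compl_singleton_of_one_lt_rank
      (by rw [rank_real_complex]; norm_num) (1 : ℂ)
    exact this.isPreconnected
  have h2 : (2 : ℂ) ∈ ({(1 : ℂ)}ᶜ : Set ℂ) := by norm_num
  have hev : (fun w => (starRingEnd ℂ) (riemannZeta ((starRingEnd ℂ) w)))
      =ᶠ[nhds (2 : ℂ)] riemannZeta := by
    have hopen : IsOpen {w : ℂ | 1 < w.re} := isOpen_lt continuous_const continuous_re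
    have hmem : (2 : ℂ) ∈ {w : ℂ | 1 < w.re} := by simp
    filter_upwards [hopen.mem_nhds hmem] with w hw
    rw [zeta_conj_of_one_lt hw, conj_conj]
  have := hga.eqOn_of_preconnected_of_eventuallyEq hfa hpre h2 hev
  have hz' := this hz
  simp only at hz'
  have := congrArg (starRingEnd ℂ) hz'
  rw [conj_conj] at this
  exact this

private lemma zeta_one_sub_zero {s : ℂ} (hζ : riemannZeta s = 0) (h0 : 0 < s.re)
    (h1 : s.re < 1) : riemannZeta (1 - s) = 0 := by
  have hs : ∀ n : ℕ, s ≠ -n := by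
    intro n h
    rw [h] at h0
    simp only [neg_re, natCast_re] at h0
    linarith [Nat.cast_nonneg (α := ℝ) n]
  have hs' : s ≠ 1 := by
    intro h; rw [h] at h1; norm_num at h1
  rw [riemannZeta_one_sub hs hs', hζ, mul_zero]

theorem rh_of_uniqueness
    (h : ∀ τ : ℝ, 0 < τ → ∀ x ∈ Set.Ioo (0 : ℝ) 1, ∀ y ∈ Set.Ioo (0 : ℝ) 1,
      (riemannZeta (x + τ * Complex.I) / (x + τ * Complex.I)).im = 0 →
      (riemannZeta (y + τ * Complex.I) / (y + τ * Complex.I)).im = 0 → x = y) :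
    ∀ s : ℂ, riemannZeta s = 0 → 0 < s.re → s.re < 1 → s.im ≠ 0 → s.re = 1 / 2 := by
  have key : ∀ s : ℂ, riemannZeta s = 0 → 0 < s.re → s.re < 1 → 0 < s.im → s.re = 1 / 2 := by
    intro s hζ h0 h1 him
    have hs_eq : (s.re : ℂ) + (s.im : ℝ) * Complex.I = s := by
      simp [Complex.re_add_im s]
    have hz1 : riemannZeta ((s.re : ℂ) + (s.im : ℝ) * Complex.I) = 0 := by rw [hs_eq]; exact hζ
    -- second zero : 1 - conj s, with re = 1 - s.re, im = s.im
    have hconj : riemannZeta ((starRingEnd ℂ) (1 - s)) = 0 := by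
      rw [zeta_conj, zeta_one_sub_zero hζ h0 h1, map_zero]
      intro hh
      have : s = 0 := by linear_combination -hh
      rw [this] at him; simp at him
    have heq2 : ((1 - s.re : ℝ) : ℂ) + (s.im : ℝ) * Complex.I = (starRingEnd ℂ) (1 - s) := by
      apply Complex.ext <;> simp
    have hz2 : riemannZeta (((1 - s.re : ℝ) : ℂ) + (s.im : ℝ) * Complex.I) = 0 := by
      rw [heq2]; exact hconj
    have hx : s.re ∈ Set.Ioo (0 : ℝ) 1 := ⟨h0, h1⟩
    have hy : (1 - s.re) ∈ Set.Ioo (0 : ℝ) 1 := ⟨by linarith, by linarith⟩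
    have := h s.im him s.re hx (1 - s.re) hy (by rw [hz1, zero_div]; rfl)
      (by rw [hz2, zero_div]; rfl)
    linarith
  intro s hζ h0 h1 him
  rcases lt_or_gt_of_ne him with hneg | hpos
  · -- use conjugate
    have hc : riemannZeta ((starRingEnd ℂ) s) = 0 := by
      rw [zeta_conj (by intro h'; rw [h'] at h1; norm_num at h1), hζ, map_zero]
    have := key ((starRingEnd ℂ) s) hc (by simpa using h0) (by simpa using h1)
      (by simpa using hneg)
    simpa using this
  · exact key s hζ h0 h1 hpos
end
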